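/- Let S be a closed surface and f : S → S a homeomorphism such that every point of S is nonwandering for f. Let K ⊆ S be a compact set with f(K) = K. Then every connected component U of S ∖ K is periodic under f: there exists an integer n > 0 with (f iterated n times) '' U = U. -/

import Mathlib

open Set Topology

/-- A point `x` is nonwandering for `f` if every open neighborhood `U` of `x`
satisfies `f^[n] '' U ∩ U ≠ ∅` for some `n > 0`. -/
def IsNonwanderingPt {X : Type*} [TopologicalSpace X] (f : X → X) (x : X) : Prop :=
  ∀ U : Set X, IsOpen U → x ∈ U → ∃ n : ℕ, 0 < n ∧ (f^[n] '' U ∩ U).Nonempty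

/-- A point `x` is periodic for `f` if `f^[n] x = x` for some `n > 0`. -/
def IsPerPt {X : Type*} (f : X → X) (x : X) : Prop :=
  ∃ n : ℕ, 0 < n ∧ f^[n] x = x

/-- The collection of connected components of the set `E`. -/
def connComps {S : Type*} [TopologicalSpace S] (E : Set S) : Set (Set S) :=
  {C | ∃ x ∈ E, C = connectedComponentIn E x}

/-- A set `K` is annular if it has an open neighborhood `A` homeomorphic to the
open annulus `AddCircle 1 × ℝ` such that `A \ K` has exactly two connected
components, both homeomorphic to the open annulus. -/
def IsAnnular {S : Type*} [TopologicalSpace S] (K : Set S) : Prop :=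
  ∃ A : Set S, IsOpen A ∧ K ⊆ A ∧ Nonempty (A ≃ₜ (AddCircle (1 : ℝ) × ℝ)) ∧
    (connComps (A \ K)).encard = 2 ∧
    ∀ C ∈ connComps (A \ K), Nonempty (C ≃ₜ (AddCircle (1 : ℝ) × ℝ))

theorem locConn {S : Type*} [TopologicalSpace S]
    (hsurf : ∀ x : S, ∃ U : Set S, IsOpen U ∧ x ∈ U ∧ Nonempty (U ≃ₜ (ℝ × ℝ))) :
    LocallyConnectedSpace S := by
  rw [locallyConnectedSpace_iff_connected_subsets]
  intro x U hU
  obtain ⟨W, hWo, hxW, ⟨e⟩⟩ := hsurf x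
  have hcoe := hWo.isOpenEmbedding_subtypeVal
  have h1 : (Subtype.val ⁻¹' U : Set W) ∈ 𝓝 (⟨x, hxW⟩ : W) :=
    hcoe.continuous.continuousAt.preimage_mem_nhds hU
  have h2 : e '' (Subtype.val ⁻¹' U) ∈ 𝓝 (e ⟨x, hxW⟩) := by
    rw [← e.map_nhds_eq]; exact Filter.image_mem_map h1
  obtain ⟨r, hr, hball⟩ := Metric.mem_nhds_iff.mp h2
  have hsub : e.symm '' Metric.ball (e ⟨x, hxW⟩) r ⊆ Subtype.val ⁻¹' U := by
    intro y ⟨z, hz, hzy⟩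
    obtain ⟨w, hw, hwz⟩ := hball hz
    rw [← hzy, ← hwz, Homeomorph.symm_apply_apply]; exact hw
  refine ⟨Subtype.val '' (e.symm '' Metric.ball (e ⟨x, hxW⟩) r), ?_, ?_, ?_⟩
  · have : e.symm '' Metric.ball (e ⟨x, hxW⟩) r ∈ 𝓝 (⟨x, hxW⟩ : W) := by
      have := e.symm.isOpenMap.image_mem_nhds (Metric.ball_mem_nhds (e ⟨x, hxW⟩) hr)
      simpa using this
    simpa using hcoe.isOpenMap.image_mem_nhds this
  · exact ((convex_ball _ _).isPreconnected.image _ e.symm.continuous.continuousOn).image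
      _ continuous_subtype_val.continuousOn
  · exact (image_mono (f := Subtype.val) hsub).trans (by simp [Set.image_preimage_subset])

theorem iterKey {S : Type*} [TopologicalSpace S] (f : S ≃ₜ S) {A : Set S}
    (hA : ⇑f '' A = A) (n : ℕ) {x : S} (hx : x ∈ A) :
    (⇑f)^[n] x ∈ A ∧
      (⇑f)^[n] '' connectedComponentIn A x = connectedComponentIn A ((⇑f)^[n] x) := by
  induction n with
  | zero => simpa using hx
  | succ m ih =>
    obtain ⟨hmem, him⟩ := ih
    rw [Function.iterate_succ']
    constructor
    · exact hA ▸ Set.mem_image_of_mem _ hmem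
    · rw [Function.comp_apply, Set.image_comp, him,
        Homeomorph.image_connectedComponentIn f hmem, hA]

theorem stmt9 {S : Type*} [TopologicalSpace S] [CompactSpace S] [T2Space S]
    [SecondCountableTopology S] [Nonempty S]
    (hsurf : ∀ x : S, ∃ U : Set S, IsOpen U ∧ x ∈ U ∧ Nonempty (U ≃ₜ (ℝ × ℝ)))
    (f : S ≃ₜ S) (hnw : ∀ x : S, IsNonwanderingPt (⇑f) x)
    (K : Set S) (hKcpt : IsCompact K) (hKinv : ⇑f '' K = K) :
    ∀ U ∈ connComps Kᶜ, ∃ n : ℕ, 0 < n ∧ (⇑f)^[n] '' U = U := by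
  have := locConn hsurf
  rintro U ⟨x, hx, rfl⟩
  have hKc : IsOpen Kᶜ := hKcpt.isClosed.isOpen_compl
  have hUo : IsOpen (connectedComponentIn Kᶜ x) := hKc.connectedComponentIn
  obtain ⟨n, hn, y, ⟨z, hz, hzy⟩, hyU⟩ := hnw x _ hUo (mem_connectedComponentIn hx)
  refine ⟨n, hn, ?_⟩
  have hAinv : ⇑f '' Kᶜ = Kᶜ := by
    rw [Set.image_compl_eq f.bijective, hKinv]
  obtain ⟨_, key⟩ := iterKey f hAinv n hx
  rw [key]
  have hy : y ∈ connectedComponentIn Kᶜ ((⇑f)^[n] x) := key ▸ ⟨z, hz, hzy⟩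
  have h1 : connectedComponentIn Kᶜ ((⇑f)^[n] x) = connectedComponentIn Kᶜ y :=
    connectedComponentIn_eq hy
  have h2 : connectedComponentIn Kᶜ x = connectedComponentIn Kᶜ y :=
    connectedComponentIn_eq hyU
  exact h1.trans h2.symm
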